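/- arXiv:2201.08485 — 3 statements merged into one kernel-verified Lean document; each statement's English description precedes it below -/
import Mathlib

section
/- Let B be the 4×4 matrix whose columns are the normalisations of the vectors v₁=(1,1,0,0), v₂=(√(1+ε²),1,ε,0), v₃=(√(1+ε²),1,0,ε), v₄=(-1,1,0,0) for 0 < ε < 1. Then B is invertible and its inverse has Frobenius norm √(8ε²+8)/ε, and in particular ‖B^{-1}‖_F ≤ 4/ε. -/
set_option maxHeartbeats 1000000 in
/-- Let `B` be the 4×4 matrix whose columns are the Euclidean
normalisations of `v₁ = (1,1,0,0)`, `v₂ = (√(1+ε²),1,ε,0)`, `v₃ = (√(1+ε²),1,0,ε)`,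
`v₄ = (-1,1,0,0)`, for `0 < ε < 1`.  Then `B` is invertible, the Frobenius norm of
`B⁻¹` equals `√(8ε² + 8)/ε`, and in particular it is at most `4/ε`. -/
theorem explicit_basis_inverse_norm (ε : ℝ) (hε0 : 0 < ε) (hε1 : ε < 1)
    (v : Fin 4 → Fin 4 → ℝ)
    (hv : v = ![![1, 1, 0, 0],
                ![Real.sqrt (1 + ε ^ 2), 1, ε, 0],
                ![Real.sqrt (1 + ε ^ 2), 1, 0, ε],
                ![-1, 1, 0, 0]])
    (B : Matrix (Fin 4) (Fin 4) ℝ)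
    (hB : ∀ i j, B i j = v j i / Real.sqrt (∑ k, v j k ^ 2)) :
    IsUnit B ∧
    Real.sqrt (∑ i, ∑ j, (B⁻¹ i j) ^ 2) = Real.sqrt (8 * ε ^ 2 + 8) / ε ∧
    Real.sqrt (∑ i, ∑ j, (B⁻¹ i j) ^ 2) ≤ 4 / ε := by
  set s : ℝ := Real.sqrt (1 + ε ^ 2) with hs_def
  set r2 : ℝ := Real.sqrt 2 with hr2_def
  have hs0 : 0 < s := Real.sqrt_pos.mpr (by positivity)
  have hr20 : 0 < r2 := Real.sqrt_pos.mpr (by norm_num)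
  have hs2 : s ^ 2 = 1 + ε ^ 2 := Real.sq_sqrt (by positivity)
  have hr22 : r2 ^ 2 = 2 := Real.sq_sqrt (by norm_num)
  have hnorm2 : Real.sqrt (2 + 2 * ε ^ 2) = r2 * s := by
    rw [show (2 : ℝ) + 2 * ε ^ 2 = 2 * (1 + ε ^ 2) by ring,
      Real.sqrt_mul (by norm_num)]
  have hB' : B = ![![1/r2, 1/r2, 1/r2, -1/r2],
      ![1/r2, 1/(r2*s), 1/(r2*s), 1/r2],
      ![0, ε/(r2*s), 0, 0],
      ![0, 0, ε/(r2*s), 0]] := by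
    funext i j
    have h := hB i j
    have hkey : Real.sqrt (s ^ 2 + 1 + ε ^ 2) = r2 * s := by
      rw [hs2, show (1 + ε ^ 2) + 1 + ε ^ 2 = 2 + 2 * ε ^ 2 by ring, hnorm2]
    fin_cases i <;> fin_cases j <;>
      simp only [hv, Fin.sum_univ_four] at h <;>
      · rw [h]
        norm_num [Matrix.cons_val_zero, Matrix.cons_val_one, Matrix.head_cons,
          Matrix.vecHead, Matrix.vecTail, Matrix.cons_val_two, Matrix.cons_val_three]
        try rw [hkey]
        try field_simp
        try ring
  set C : Matrix (Fin 4) (Fin 4) ℝ :=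
    ![![1/r2, 1/r2, -(s+1)/(r2*ε), -(s+1)/(r2*ε)],
      ![0, 0, r2*s/ε, 0],
      ![0, 0, 0, r2*s/ε],
      ![-1/r2, 1/r2, (s-1)/(r2*ε), (s-1)/(r2*ε)]] with hC_def
  have hCB : C * B = 1 := by
    rw [hB']
    ext i j
    fin_cases i <;> fin_cases j <;>
      · erw [Matrix.mul_apply]
        simp [hC_def, Matrix.mul_apply, Fin.sum_univ_four, Matrix.vecHead,
          Matrix.vecTail, Matrix.cons_val_two, Matrix.cons_val_three]
        try field_simp
        try nlinarith [hs2, hr22, hs0, hr20]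
  have hIsUnit : IsUnit B := (Matrix.isUnit_iff_isUnit_det B).mpr (Matrix.isUnit_det_of_left_inverse hCB)
  have hinv : B⁻¹ = C := Matrix.inv_eq_left_inv hCB
  have hsum : (∑ i, ∑ j, (B⁻¹ i j) ^ 2) = (8 * ε ^ 2 + 8) / ε ^ 2 := by
    have e0 : (1/r2)^2 = 1/2 := by rw [div_pow, hr22]; norm_num
    have e0' : (-1/r2)^2 = 1/2 := by rw [div_pow, hr22]; norm_num
    have e1 : ((s+1)/(r2*ε))^2 = (s+1)^2/(2*ε^2) := by
      rw [div_pow, mul_pow, hr22]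
    have e1' : (-(s+1)/(r2*ε))^2 = (s+1)^2/(2*ε^2) := by
      rw [div_pow, mul_pow, hr22, neg_pow, ]; ring
    have e2 : ((s-1)/(r2*ε))^2 = (s-1)^2/(2*ε^2) := by
      rw [div_pow, mul_pow, hr22]
    have e3 : (r2*s/ε)^2 = (2+2*ε^2)/ε^2 := by
      rw [div_pow, mul_pow, hr22, hs2]; ring
    rw [hinv]
    simp only [hC_def, Fin.sum_univ_four, Matrix.cons_val_zero, Matrix.cons_val_one,
      Matrix.head_cons, Matrix.cons_val', Matrix.empty_val', Matrix.cons_val_fin_one,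
      Matrix.vecHead, Matrix.vecTail, Matrix.cons_val_two, Matrix.cons_val_three,
      Function.comp_apply, Fin.succ_zero_eq_one, Fin.succ_one_eq_two, Matrix.cons_val_succ]
    rw [e0, e0', e1', e2, e3]
    have hε2 : ε^2 ≠ 0 := by positivity
    field_simp
    linear_combination 4 * hs2
  rw [hsum]
  have hsqrt : Real.sqrt ((8 * ε ^ 2 + 8) / ε ^ 2)
      = Real.sqrt (8 * ε ^ 2 + 8) / ε := by
    rw [Real.sqrt_div (by positivity), Real.sqrt_sq hε0.le]
  refine ⟨hIsUnit, hsqrt, ?_⟩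
  rw [hsqrt]
  have h4 : Real.sqrt (8 * ε ^ 2 + 8) ≤ 4 := by
    rw [show (4:ℝ) = Real.sqrt 16 by
      rw [show (16:ℝ) = 4^2 by norm_num, Real.sqrt_sq (by norm_num)]]
    exact Real.sqrt_le_sqrt (by nlinarith)
  exact div_le_div_of_nonneg_right h4 hε0.le
end

section
/- (Characterisation of light-sink connections) A u(n)-valued connection A on the causal diamond satisfies A ◁ P^A_{y←z_y} = A (i.e. gauging by the field y ↦ P^A_{y←z_y} fixes A) if and only if A_y(∂_t) = A_y(∂_r) for all y, where ∂_r is the outward spatial radial direction. Equivalently, A vanishes on the lightlike radial direction v_{y←z_y} = (1/√2)(∂_r - ∂_t). -/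
open Matrix

attribute [local instance] Matrix.frobeniusNormedAddCommGroup Matrix.frobeniusNormedSpace
  Matrix.frobeniusNormedRing

/-- Spatial Euclidean norm of a point of Minkowski space `ℝ^{1+3}` (coordinate 0 is time). -/
noncomputable def spatialNorm (y : Fin 4 → ℝ) : ℝ :=
  Real.sqrt (y 1 ^ 2 + y 2 ^ 2 + y 3 ^ 2)

/-- The point `z_y` on the time axis `O` in the future light cone of `y`. -/
noncomputable def zpt (y : Fin 4 → ℝ) : Fin 4 → ℝ :=
  fun i => if i = 0 then y 0 + spatialNorm y else 0

/-! ### Auxiliary lemmas -/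

attribute [local instance] Matrix.frobeniusNormedAlgebra

lemma zpt_ne (y : Fin 4 → ℝ) {i : Fin 4} (h : i ≠ 0) : zpt y i = 0 := by
  simp [zpt, h]

lemma zpt_zero (y : Fin 4 → ℝ) : zpt y 0 = y 0 + spatialNorm y := by
  simp [zpt]

lemma spatialNorm_zpt (y : Fin 4 → ℝ) : spatialNorm (zpt y) = 0 := by
  simp [spatialNorm, zpt_ne y (by decide : (1:Fin 4) ≠ 0),
    zpt_ne y (by decide : (2:Fin 4) ≠ 0), zpt_ne y (by decide : (3:Fin 4) ≠ 0)]

lemma zpt_zpt (y : Fin 4 → ℝ) : zpt (zpt y) = zpt y := by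
  funext i
  by_cases h : i = 0
  · rw [h, zpt_zero, spatialNorm_zpt, add_zero]
  · rw [zpt_ne _ h, zpt_ne _ h]

lemma zpt_seg (y : Fin 4 → ℝ) {s : ℝ} (hs : 0 ≤ s) :
    zpt (zpt y + s • (y - zpt y)) = zpt y := by
  set w := zpt y + s • (y - zpt y) with hw
  have hwi : ∀ i : Fin 4, i ≠ 0 → w i = s * y i := by
    intro i hi
    simp [hw, zpt_ne y hi]
  have hsn : spatialNorm w = s * spatialNorm y := by
    rw [spatialNorm, hwi 1 (by decide), hwi 2 (by decide), hwi 3 (by decide),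
      show (s * y 1)^2 + (s * y 2)^2 + (s * y 3)^2 = s^2 * (y 1^2 + y 2^2 + y 3^2) by ring,
      Real.sqrt_mul (sq_nonneg s), Real.sqrt_sq hs, spatialNorm]
  funext i
  by_cases h : i = 0
  · rw [h, zpt_zero, hsn]
    have : w 0 = y 0 + spatialNorm y - s * spatialNorm y := by
      simp [hw, zpt_zero]; ring
    rw [this, zpt_zero]; ring
  · rw [zpt_ne _ h, zpt_ne _ h]

lemma zpt_seg_sub (y : Fin 4 → ℝ) {s : ℝ} (hs : 0 ≤ s) :
    (zpt y + s • (y - zpt y)) - zpt (zpt y + s • (y - zpt y)) = s • (y - zpt y) := by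
  rw [zpt_seg y hs, add_sub_cancel_left]

noncomputable instance matCompl {n : ℕ} : CompleteSpace (Matrix (Fin n) (Fin n) ℂ) :=
  FiniteDimensional.complete ℝ _

/-- Derivative of the pointwise `Ring.inverse` of a matrix-valued curve. -/
lemma deriv_ringInverse {n : ℕ} (c : ℝ → Matrix (Fin n) (Fin n) ℂ)
    (c' : Matrix (Fin n) (Fin n) ℂ) (s : ℝ) (hc : HasDerivAt c c' s) (hu : IsUnit (c s)) :
    HasDerivAt (fun t => Ring.inverse (c t))
      (-(Ring.inverse (c s) * c' * Ring.inverse (c s))) s := by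
  have h0 := hasFDerivAt_ringInverse (𝕜 := ℝ) hu.unit
  rw [← Ring.inverse_unit, hu.unit_spec] at h0
  have h1 := h0.comp_hasDerivAt s hc
  simp at h1
  exact h1

/-- A function `ℝ → Matrix` with vanishing derivative everywhere is constant. -/
lemma const_of_deriv_zero {E : Type*} [NormedAddCommGroup E] [NormedSpace ℝ E]
    (f : ℝ → E) (hf : ∀ s, HasDerivAt f 0 s) (a b : ℝ) : f a = f b :=
  is_const_of_deriv_eq_zero (fun s => (hf s).differentiableAt) (fun s => (hf s).deriv) a b

/-- **Characterisation of light-sink connections.** A u(n)-valued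
connection `A` on the causal diamond satisfies `A ◁ P^A_{y←z_y} = A` if and only if `A`
vanishes on the lightlike radial direction `y - z_y ∝ (1/√2)(∂_r - ∂_t)` at every point,
i.e. `A_y(∂_t) = A_y(∂_r)` for all `y`.  Here `U y` is the parallel transport along the
straight segment from `z_y` to `y` (parametrised on `[0,1]`), `dP` is the (total)
derivative of the field `y ↦ P^A_{y←z_y} = U y 1`, and the gauged connection is
`(A ◁ P^A)_y(v) = (U y 1)⁻¹ dP_y(v) + (U y 1)⁻¹ A_y(v) U y 1`. -/
theorem light_sink_characterisation {n : ℕ}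
    (A : (Fin 4 → ℝ) → ((Fin 4 → ℝ) →L[ℝ] Matrix (Fin n) (Fin n) ℂ))
    (hA : ∀ y v, (A y v)ᴴ = -(A y v))
    (U : (Fin 4 → ℝ) → ℝ → Matrix (Fin n) (Fin n) ℂ)
    (hU0 : ∀ y, U y 0 = 1)
    (hU : ∀ y s, HasDerivAt (U y)
      (-(A (zpt y + s • (y - zpt y)) (y - zpt y) * U y s)) s)
    (hUinv : ∀ y s, IsUnit (U y s))
    (dP : (Fin 4 → ℝ) → ((Fin 4 → ℝ) →L[ℝ] Matrix (Fin n) (Fin n) ℂ))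
    (hdP : ∀ y, HasFDerivAt (fun y => U y 1) (dP y) y) :
    (∀ y v, (U y 1)⁻¹ * dP y v + (U y 1)⁻¹ * A y v * U y 1 = A y v)
      ↔ (∀ y, A y (y - zpt y) = 0) := by
  -- the transport starting at a point of the axis is constantly 1
  have key0 : ∀ x : Fin 4 → ℝ, ∀ s : ℝ, U (zpt x) s = 1 := by
    intro x s
    have hz : zpt x - zpt (zpt x) = 0 := by rw [zpt_zpt]; exact sub_self _
    have hd : ∀ t : ℝ, HasDerivAt (U (zpt x)) 0 t := by
      intro t
      have h := hU (zpt x) t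
      rw [hz] at h
      simpa using h
    rw [← hU0 (zpt x)]
    exact const_of_deriv_zero _ hd s 0
  -- if the transport field is constantly 1, then dP = 0
  have main : (∀ x, U x 1 = 1) → ∀ x, dP x = 0 := by
    intro hP1 x
    have h := hdP x
    rw [show (fun y => U y 1) = fun _ => (1 : Matrix (Fin n) (Fin n) ℂ) from funext hP1] at h
    exact h.unique (hasFDerivAt_const _ _)
  have hone : (1 : Matrix (Fin n) (Fin n) ℂ)⁻¹ = 1 := by
    rw [Matrix.nonsing_inv_eq_ringInverse, Ring.inverse_one]
  constructor
  · -- gauge-fixing implies the connection vanishes radially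
    intro G
    -- first, express dP via the gauge-fixing equation
    have GR : ∀ x w, dP x w = U x 1 * A x w - A x w * U x 1 := by
      intro x w
      have hdet := (Matrix.isUnit_iff_isUnit_det _).mp (hUinv x 1)
      have h1 : U x 1 * (U x 1)⁻¹ = 1 := Matrix.mul_nonsing_inv _ hdet
      have h2 := congrArg (fun m => U x 1 * m) (G x w)
      simp only [mul_add, ← mul_assoc, h1, one_mul] at h2
      exact eq_sub_of_add_eq h2
    -- the conjugation trick: the transport field is constantly 1
    have hP1 : ∀ x, U x 1 = 1 := by
      intro x
      have hγ : ∀ s : ℝ, HasDerivAt (fun s : ℝ => zpt x + s • (x - zpt x)) (x - zpt x) s := by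
        intro s
        simpa using ((hasDerivAt_id s).smul_const (x - zpt x)).const_add (zpt x)
      have hh : ∀ s : ℝ, HasDerivAt (fun s : ℝ => U (zpt x + s • (x - zpt x)) 1)
          (U (zpt x + s • (x - zpt x)) 1 * A (zpt x + s • (x - zpt x)) (x - zpt x)
            - A (zpt x + s • (x - zpt x)) (x - zpt x) * U (zpt x + s • (x - zpt x)) 1) s := by
        intro s
        have h := (hdP _).comp_hasDerivAt s (hγ s)
        exact h.congr_deriv (GR _ _)
      have hIv : ∀ s : ℝ, HasDerivAt (fun t => Ring.inverse (U x t))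
          (Ring.inverse (U x s) * A (zpt x + s • (x - zpt x)) (x - zpt x)) s := by
        intro s
        have h := deriv_ringInverse (U x) _ s (hU x s) (hUinv x s)
        have e : -(Ring.inverse (U x s) * -(A (zpt x + s • (x - zpt x)) (x - zpt x) * U x s)
              * Ring.inverse (U x s))
            = Ring.inverse (U x s) * A (zpt x + s • (x - zpt x)) (x - zpt x)
              * (U x s * Ring.inverse (U x s)) := by
          noncomm_ring
        rw [e, Ring.mul_inverse_cancel _ (hUinv x s), mul_one] at h
        exact h
      have hF : ∀ s : ℝ, HasDerivAt
          (fun t => Ring.inverse (U x t) * U (zpt x + t • (x - zpt x)) 1 * U x t) 0 s := by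
        intro s
        have h := ((hIv s).mul (hh s)).mul (hU x s)
        refine h.congr_deriv ?_
        simp only [Pi.mul_apply]
        noncomm_ring
      have hc := const_of_deriv_zero _ hF 1 0
      have h1x : zpt x + (1 : ℝ) • (x - zpt x) = x := by
        rw [one_smul]; abel
      rw [h1x] at hc
      simp only [zero_smul, add_zero, hU0, mul_one, Ring.inverse_one, one_mul, key0] at hc
      rwa [Ring.inverse_mul_cancel _ (hUinv x 1), one_mul] at hc
    -- reparametrisation: `U y s = 1` for all `s > 0`
    intro y
    have hpos : ∀ s₀ : ℝ, 0 < s₀ → U y s₀ = 1 := by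
      intro s₀ hs₀
      set y' := zpt y + s₀ • (y - zpt y) with hy'
      have hzpt' : zpt y' = zpt y := zpt_seg y hs₀.le
      have hsub' : y' - zpt y' = s₀ • (y - zpt y) := by
        rw [hzpt', hy', add_sub_cancel_left]
      have hc₀ : ∀ r : ℝ, HasDerivAt (U y')
          (-(A (zpt y + (r * s₀) • (y - zpt y)) (s₀ • (y - zpt y)) * U y' r)) r := by
        intro r
        have h := hU y' r
        rwa [hsub', hzpt', smul_smul] at h
      have hW : ∀ r : ℝ, HasDerivAt (fun r : ℝ => U y (r * s₀))
          (-(A (zpt y + (r * s₀) • (y - zpt y)) (s₀ • (y - zpt y)) * U y (r * s₀))) r := by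
        intro r
        have h1 : HasDerivAt (fun r : ℝ => r * s₀) s₀ r := by
          simpa using (hasDerivAt_id r).mul_const s₀
        have h2 : HasDerivAt (fun r : ℝ => U y (r * s₀))
            (s₀ • -(A (zpt y + (r * s₀) • (y - zpt y)) (y - zpt y) * U y (r * s₀))) r :=
          HasDerivAt.scomp_of_eq r (hU y (r * s₀)) h1 rfl
        convert h2 using 1
        rw [_root_.map_smul, smul_mul_assoc, ← smul_neg]
      have hIv : ∀ r : ℝ, HasDerivAt (fun t => Ring.inverse (U y' t))
          (Ring.inverse (U y' r) * A (zpt y + (r * s₀) • (y - zpt y)) (s₀ • (y - zpt y))) r := by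
        intro r
        have h := deriv_ringInverse (U y') _ r (hc₀ r) (hUinv y' r)
        have e : -(Ring.inverse (U y' r)
              * -(A (zpt y + (r * s₀) • (y - zpt y)) (s₀ • (y - zpt y)) * U y' r)
              * Ring.inverse (U y' r))
            = Ring.inverse (U y' r) * A (zpt y + (r * s₀) • (y - zpt y)) (s₀ • (y - zpt y))
              * (U y' r * Ring.inverse (U y' r)) := by
          noncomm_ring
        rw [e, Ring.mul_inverse_cancel _ (hUinv y' r), mul_one] at h
        exact h
      have hG : ∀ r : ℝ, HasDerivAt (fun r : ℝ => Ring.inverse (U y' r) * U y (r * s₀)) 0 r := by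
        intro r
        have h := (hIv r).mul (hW r)
        refine h.congr_deriv ?_
        noncomm_ring
      have hc := const_of_deriv_zero _ hG 1 0
      simp only [one_mul, zero_mul, hU0, hP1 y', Ring.inverse_one, mul_one] at hc
      exact hc
    -- conclude: the ODE generator vanishes at `s = 1`
    have hev : U y =ᶠ[nhds 1] fun _ => (1 : Matrix (Fin n) (Fin n) ℂ) := by
      filter_upwards [Ioi_mem_nhds (by norm_num : (0:ℝ) < 1)] with s hs using hpos s hs
    have h0 : HasDerivAt (U y) 0 1 := (hasDerivAt_const 1 _).congr_of_eventuallyEq hev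
    have h1 := (hU y 1).unique h0
    have h1x : zpt y + (1 : ℝ) • (y - zpt y) = y := by
      rw [one_smul]; abel
    rwa [h1x, hP1 y, mul_one, neg_eq_zero] at h1
  · -- radial vanishing implies gauge-fixing
    intro H
    have hP1 : ∀ x, U x 1 = 1 := by
      intro x
      have hAv : ∀ s : ℝ, 0 < s → A (zpt x + s • (x - zpt x)) (x - zpt x) = 0 := by
        intro s hs
        have h2 := H (zpt x + s • (x - zpt x))
        rw [zpt_seg_sub x hs.le, _root_.map_smul] at h2
        rcases smul_eq_zero.mp h2 with h | h
        · exact absurd h hs.ne'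
        · exact h
      have hcont : ContinuousOn (fun t : ℝ => U x (1 - t)) (Set.Icc 0 1) := by
        apply Continuous.continuousOn
        have hc : Continuous (U x) := by
          rw [continuous_iff_continuousAt]
          exact fun t => (hU x t).continuousAt
        exact hc.comp (continuous_const.sub continuous_id)
      have hderiv : ∀ t ∈ Set.Ico (0:ℝ) 1,
          HasDerivWithinAt (fun t : ℝ => U x (1 - t)) 0 (Set.Ici t) t := by
        intro t ht
        have h1 : HasDerivAt (fun t : ℝ => (1 : ℝ) - t) (-1) t := by
          exact ((hasDerivAt_const t (1:ℝ)).sub (hasDerivAt_id t)).congr_deriv (by norm_num)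
        have h2 : HasDerivAt (fun t : ℝ => U x (1 - t))
            ((-1 : ℝ) • -(A (zpt x + (1 - t) • (x - zpt x)) (x - zpt x) * U x (1 - t))) t :=
          HasDerivAt.scomp_of_eq t (hU x (1 - t)) h1 rfl
        rw [hAv (1 - t) (by linarith [ht.2])] at h2
        have h3 : HasDerivAt (fun t : ℝ => U x (1 - t)) 0 t := by
          simpa [Function.comp] using h2
        exact h3.hasDerivWithinAt
      have := constant_of_has_deriv_right_zero hcont hderiv 1 (by norm_num)
      simpa [hU0 x] using this.symm
    have hdP0 := main hP1
    intro y v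
    rw [hP1 y, hdP0 y]
    simp [hone]
end

section
/- (Uniqueness of light-sink representative) If φ ∈ H (smooth U(n)-valued maps on the diamond equal to Id on the time axis O) and A ◁ φ is a light-sink connection, then necessarily φ(y) = P^A_{y←z_y} for all y. Consequently (A ◁ φ) ◁ P^{A◁φ}_{y←z_y} = A ◁ P^A_{y←z_y} for every φ ∈ H, so the map sending the H-orbit of A to A ◁ P^A_{y←z_y} is well-defined and each H-orbit contains a unique light-sink connection. -/
open Matrix

attribute [local instance] Matrix.frobeniusNormedAddCommGroup Matrix.frobeniusNormedSpace
  Matrix.frobeniusNormedRing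

attribute [local instance] Matrix.frobeniusNormedAlgebra

/-- Conjugate transpose as a continuous `ℝ`-linear map on complex matrices. -/
noncomputable def ctCLM (n : ℕ) : Matrix (Fin n) (Fin n) ℂ →L[ℝ] Matrix (Fin n) (Fin n) ℂ :=
  LinearMap.toContinuousLinearMap
  { toFun := fun M => Mᴴ
    map_add' := fun A B => Matrix.conjTranspose_add A B
    map_smul' := fun c M => by
      ext i j
      simp [Matrix.conjTranspose_apply] }

lemma hasDerivAt_ct {n : ℕ} {f : ℝ → Matrix (Fin n) (Fin n) ℂ}
    {f' : Matrix (Fin n) (Fin n) ℂ} {s : ℝ}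
    (h : HasDerivAt f f' s) : HasDerivAt (fun s => (f s)ᴴ) f'ᴴ s := by
  have := (ctCLM n).hasFDerivAt.comp_hasDerivAt s h
  exact this

lemma alg_helper {M : Type*} [Ring M] (p q a d v : M) (h : p * q = 1) :
    d * v + p * -((q * d + q * a * p) * v) = -(a * (p * v)) := by
  have h1 : p * ((q * d + q * a * p) * v) = d * v + a * (p * v) := by
    calc p * ((q * d + q * a * p) * v)
        = (p * q) * (d * v) + (p * q) * (a * (p * v)) := by noncomm_ring
      _ = d * v + a * (p * v) := by rw [h, one_mul, one_mul]
  rw [mul_neg, h1]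
  abel

lemma const_of_deriv_zero_s16 {n : ℕ} {f : ℝ → Matrix (Fin n) (Fin n) ℂ}
    (h : ∀ s, HasDerivAt f 0 s) : f 1 = f 0 :=
  is_const_of_deriv_eq_zero (fun s => (h s).differentiableAt) (fun s => (h s).deriv) 1 0

/-- **Uniqueness of the light-sink representative.** If `φ ∈ H` (smooth
unitary-valued, `φ = Id` on the time axis `O`) is such that `B := A ◁ φ` is a light-sink
connection (its parallel transports `V y 1 = P^B_{y←z_y}` are all `Id`), then
`φ y = P^A_{y←z_y} = U y 1` for all `y`, and consequently `A ◁ φ = A ◁ P^A_{y←z_y}`,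
so that the map sending the `H`-orbit of `A` to `A ◁ P^A_{y←z_y}` is well-defined and
each `H`-orbit contains a unique light-sink connection. -/
theorem light_sink_uniqueness {n : ℕ}
    (A : (Fin 4 → ℝ) → (Fin 4 → ℝ) → Matrix (Fin n) (Fin n) ℂ)
    (hA : ∀ y v, (A y v)ᴴ = -(A y v))
    (φ : (Fin 4 → ℝ) → Matrix (Fin n) (Fin n) ℂ)
    (hφu : ∀ y, φ y ∈ Matrix.unitaryGroup (Fin n) ℂ)
    (hφO : ∀ y : Fin 4 → ℝ, y 1 = 0 → y 2 = 0 → y 3 = 0 → φ y = 1)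
    (dφ : (Fin 4 → ℝ) → ((Fin 4 → ℝ) →L[ℝ] Matrix (Fin n) (Fin n) ℂ))
    (hdφ : ∀ y, HasFDerivAt φ (dφ y) y)
    (U : (Fin 4 → ℝ) → ℝ → Matrix (Fin n) (Fin n) ℂ)
    (hU0 : ∀ y, U y 0 = 1)
    (hU : ∀ y s, HasDerivAt (U y)
      (-(A (zpt y + s • (y - zpt y)) (y - zpt y) * U y s)) s)
    (dP : (Fin 4 → ℝ) → ((Fin 4 → ℝ) →L[ℝ] Matrix (Fin n) (Fin n) ℂ))
    (hdP : ∀ y, HasFDerivAt (fun y => U y 1) (dP y) y)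
    -- `V y` is the parallel transport of `B = A ◁ φ` along the segment from `z_y` to `y`
    (V : (Fin 4 → ℝ) → ℝ → Matrix (Fin n) (Fin n) ℂ)
    (hV0 : ∀ y, V y 0 = 1)
    (hV : ∀ y s, HasDerivAt (V y)
      (-(((φ (zpt y + s • (y - zpt y)))⁻¹ * dφ (zpt y + s • (y - zpt y)) (y - zpt y)
          + (φ (zpt y + s • (y - zpt y)))⁻¹ *
              A (zpt y + s • (y - zpt y)) (y - zpt y) *
              φ (zpt y + s • (y - zpt y))) * V y s)) s)
    -- `A ◁ φ` is light-sink: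
    (hls : ∀ y, V y 1 = 1) :
    (∀ y, φ y = U y 1) ∧
    (∀ y v, (φ y)⁻¹ * dφ y v + (φ y)⁻¹ * A y v * φ y
        = (U y 1)⁻¹ * dP y v + (U y 1)⁻¹ * A y v * U y 1) := by
  have hzpt : ∀ y, φ (zpt y) = 1 := fun y =>
    hφO _ (by simp [zpt]) (by simp [zpt]) (by simp [zpt])
  have hφinv : ∀ y, φ y * (φ y)⁻¹ = 1 := by
    intro y
    have h : φ y * star (φ y) = 1 := (Matrix.mem_unitaryGroup_iff).mp (hφu y)
    rw [Matrix.inv_eq_right_inv h]; exact h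
  have key : ∀ y, φ y = U y 1 := by
    intro y
    set c : Fin 4 → ℝ := y - zpt y with hc
    set γ : ℝ → (Fin 4 → ℝ) := fun s => zpt y + s • c with hγdef
    have hγ : ∀ s, HasDerivAt γ c s := by
      intro s
      have h1 : HasDerivAt (fun s : ℝ => s • c) ((1 : ℝ) • c) s :=
        (hasDerivAt_id s).smul_const c
      simpa [hγdef] using (h1.const_add (zpt y))
    have hγ0 : γ 0 = zpt y := by simp [hγdef]
    have hγ1 : γ 1 = y := by simp [hγdef, hc]
    have hφγ : ∀ s, HasDerivAt (fun s => φ (γ s)) (dφ (γ s) c) s :=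
      fun s => (hdφ (γ s)).comp_hasDerivAt s (hγ s)
    set W : ℝ → Matrix (Fin n) (Fin n) ℂ := fun s => φ (γ s) * V y s with hWdef
    have hW : ∀ s, HasDerivAt W (-(A (γ s) c * W s)) s := by
      intro s
      have h := (hφγ s).mul (hV y s)
      convert h using 1
      rotate_right
      exact (alg_helper (φ (γ s)) (φ (γ s))⁻¹ (A (γ s) c) (dφ (γ s) c) (V y s)
        (hφinv (γ s))).symm
      all_goals rfl
    -- Uᴴ U is constant
    have hUU : ∀ s, HasDerivAt (fun s => (U y s)ᴴ * U y s) 0 s := by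
      intro s
      have h := (hasDerivAt_ct (hU y s)).mul (hU y s)
      convert h using 1
      rotate_right
      rw [Matrix.conjTranspose_neg, Matrix.conjTranspose_mul, hA]
      simp [mul_assoc]
      all_goals rfl
    -- Uᴴ W is constant
    have hUW : ∀ s, HasDerivAt (fun s => (U y s)ᴴ * W s) 0 s := by
      intro s
      have h := (hasDerivAt_ct (hU y s)).mul (hW s)
      convert h using 1
      rotate_right
      rw [Matrix.conjTranspose_neg, Matrix.conjTranspose_mul, hA]
      simp [mul_assoc, hγdef, hc]
      all_goals rfl
    have hUU1 : (U y 1)ᴴ * U y 1 = 1 := by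
      have := const_of_deriv_zero_s16 hUU
      simpa [hU0 y] using this
    have hUW1 : (U y 1)ᴴ * φ y = 1 := by
      have := const_of_deriv_zero_s16 hUW
      simp only [hU0 y, hWdef, hγ0, hγ1, hzpt, hV0, hls, Matrix.conjTranspose_one,
        one_mul, mul_one] at this
      simpa using this
    have hright : U y 1 * (U y 1)ᴴ = 1 := mul_eq_one_comm.mp hUU1
    calc φ y = 1 * φ y := (one_mul _).symm
      _ = U y 1 * (U y 1)ᴴ * φ y := by rw [hright]
      _ = U y 1 * ((U y 1)ᴴ * φ y) := by rw [mul_assoc]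
      _ = U y 1 := by rw [hUW1, mul_one]
  refine ⟨key, ?_⟩
  intro y v
  have hφeq : φ = fun y => U y 1 := funext key
  have hd : dφ y = dP y := by
    have h1 : HasFDerivAt (fun y => U y 1) (dφ y) y := hφeq ▸ hdφ y
    exact h1.unique (hdP y)
  rw [key y, hd]
end
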